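/- Let d_S = 2 and let the utility u with u(0) = 0 be 'incoherent', i.e. Z = u((ε₂ − ε₁)/2) − u(−(ε₂ − ε₁)/2) = 0. Then for q = 1/2 and any qubit density matrix ρ_S with ground-state population p = ⟨ε₁|ρ_S|ε₁⟩, the optimal expected utility equals 𝓤(ρ_S) = max(0, X − pY), where X = u(ε₂ − ε₁) and Y = u(ε₂ − ε₁) − u(−(ε₂ − ε₁)); in particular 𝓤(ρ_S) = 𝓤(Δ(ρ_S)) where Δ is the dephasing in the energy eigenbasis. -/
import Mathlib


open Matrix BigOperators Finset Kronecker
open scoped ComplexOrder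

noncomputable section

namespace Daemonic

/-- The outer product `|x⟩⟨y|` as a matrix. -/
def ketbra {ι : Type*} [Fintype ι] (x y : ι → ℂ) : Matrix ι ι ℂ :=
  Matrix.vecMulVec x (star y)

/-- A family of vectors is orthonormal. -/
def ONFam {ι κ : Type*} [Fintype ι] [DecidableEq κ] (v : κ → ι → ℂ) : Prop :=
  ∀ i j, star (v i) ⬝ᵥ v j = if i = j then 1 else 0

/-- A density matrix: positive semidefinite with unit trace. -/
def IsDensity {ι : Type*} [Fintype ι] (ρ : Matrix ι ι ℂ) : Prop :=
  ρ.PosSemidef ∧ ρ.trace = 1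

/-- The matrix element `⟨x|M|y⟩`. -/
def matElem {ι : Type*} [Fintype ι] (M : Matrix ι ι ℂ) (x y : ι → ℂ) : ℂ :=
  star x ⬝ᵥ (M *ᵥ y)

/-- The Hamiltonian `H_S = ∑ₖ εₖ |εₖ⟩⟨εₖ|`. -/
def ham {n : ℕ} (ε : Fin n → ℝ) (v : Fin n → Fin n → ℂ) : Matrix (Fin n) (Fin n) ℂ :=
  ∑ k, (ε k : ℂ) • ketbra (v k) (v k)

/-- `e^{t H_S} = ∑ₖ e^{t εₖ} |εₖ⟩⟨εₖ|` (functional calculus in the eigenbasis of `H_S`). -/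
def expHam {n : ℕ} (ε : Fin n → ℝ) (v : Fin n → Fin n → ℂ) (t : ℝ) :
    Matrix (Fin n) (Fin n) ℂ :=
  ∑ k, (Real.exp (t * ε k) : ℂ) • ketbra (v k) (v k)

/-- The expected utility `⟨u(w)⟩_{ρ,U}` for quasiprobability parameter `q`,
with respect to the eigenvalues `ε` and orthonormal eigenvectors `v` of `H_S`. -/
def expUtil {n : ℕ} (u : ℝ → ℝ) (q : ℝ) (ε : Fin n → ℝ) (v : Fin n → Fin n → ℂ)
    (ρ U : Matrix (Fin n) (Fin n) ℂ) : ℝ :=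
  ∑ i, ∑ j, ∑ k,
    (matElem ρ (v i) (v j) * matElem Uᴴ (v j) (v k) * matElem U (v k) (v i)).re *
      u (q * ε i + (1 - q) * ε j - ε k)

/-- The optimal expected utility `𝓤(ρ) = max over unitaries U of ⟨u(w)⟩_{ρ,U}`. -/
def optUtil {n : ℕ} (u : ℝ → ℝ) (q : ℝ) (ε : Fin n → ℝ) (v : Fin n → Fin n → ℂ)
    (ρ : Matrix (Fin n) (Fin n) ℂ) : ℝ :=
  ⨆ U : Matrix.unitaryGroup (Fin n) ℂ, expUtil u q ε v ρ (U : Matrix (Fin n) (Fin n) ℂ)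

/-- The exponential utility `u(w) = (1 - e^{-r w})/r`. -/
def expUtility (r : ℝ) : ℝ → ℝ := fun w => (1 - Real.exp (-r * w)) / r

/-- The partial trace over the ancilla. -/
def ptraceA {dS dA : ℕ} (ρSA : Matrix (Fin dS × Fin dA) (Fin dS × Fin dA) ℂ) :
    Matrix (Fin dS) (Fin dS) ℂ :=
  Matrix.of fun i j => ∑ a, ρSA (i, a) (j, a)

/-- The unnormalized conditional state `Tr_A((I ⊗ Π_a) ρ_SA (I ⊗ Π_a))`, where
`Π_a = |a⟩⟨a|` projects onto the vector `w a` of an orthonormal basis `w` of the ancilla. -/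
def condUnnorm {dS dA : ℕ} (w : Fin dA → Fin dA → ℂ)
    (ρSA : Matrix (Fin dS × Fin dA) (Fin dS × Fin dA) ℂ) (a : Fin dA) :
    Matrix (Fin dS) (Fin dS) ℂ :=
  Matrix.of fun i j => ∑ c, ∑ d, ρSA (i, c) (j, d) * (w a d * star (w a c))

/-- The outcome probability `p_a = Tr((I ⊗ Π_a) ρ_SA)`. -/
def prob {dS dA : ℕ} (w : Fin dA → Fin dA → ℂ)
    (ρSA : Matrix (Fin dS × Fin dA) (Fin dS × Fin dA) ℂ) (a : Fin dA) : ℝ :=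
  ((condUnnorm w ρSA a).trace).re

/-- The conditional state `ρ_{S|a}`. -/
def condState {dS dA : ℕ} (w : Fin dA → Fin dA → ℂ)
    (ρSA : Matrix (Fin dS × Fin dA) (Fin dS × Fin dA) ℂ) (a : Fin dA) :
    Matrix (Fin dS) (Fin dS) ℂ :=
  ((prob w ρSA a : ℂ))⁻¹ • condUnnorm w ρSA a

/-- The daemonic expected utility `𝓤_{{Π_a}}(ρ_SA) = ∑_a p_a 𝓤(ρ_{S|a})`. -/
def daemonicUtil {dS dA : ℕ} (u : ℝ → ℝ) (q : ℝ) (ε : Fin dS → ℝ)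
    (v : Fin dS → Fin dS → ℂ) (w : Fin dA → Fin dA → ℂ)
    (ρSA : Matrix (Fin dS × Fin dA) (Fin dS × Fin dA) ℂ) : ℝ :=
  ∑ a, prob w ρSA a * optUtil u q ε v (condState w ρSA a)

/-- The maximum daemonic gain `δ𝓤(ρ_SA)`, maximizing over all orthonormal bases of the
ancilla (equivalently, over the rows of all unitary matrices). -/
def daemonicGain {dS dA : ℕ} (u : ℝ → ℝ) (q : ℝ) (ε : Fin dS → ℝ)
    (v : Fin dS → Fin dS → ℂ)
    (ρSA : Matrix (Fin dS × Fin dA) (Fin dS × Fin dA) ℂ) : ℝ :=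
  (⨆ V : Matrix.unitaryGroup (Fin dA) ℂ,
      daemonicUtil u q ε v (fun a => (V : Matrix (Fin dA) (Fin dA) ℂ) a) ρSA) -
    optUtil u q ε v (ptraceA ρSA)

/-- The ergotropy of a (possibly unnormalized) state `σ` with respect to a Hamiltonian `H`:
`ℰ_H(σ) = max over unitaries U of (Tr(Hσ) - Tr(H U σ U†))`. -/
def ergotropyH {n : ℕ} (H σ : Matrix (Fin n) (Fin n) ℂ) : ℝ :=
  ⨆ U : Matrix.unitaryGroup (Fin n) ℂ,
    ((H * σ).trace -
      (H * ((U : Matrix (Fin n) (Fin n) ℂ) * σ * (U : Matrix (Fin n) (Fin n) ℂ)ᴴ)).trace).re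

/-- A separable bipartite state: a convex combination of product states. -/
def IsSeparable {dS dA : ℕ} (ρSA : Matrix (Fin dS × Fin dA) (Fin dS × Fin dA) ℂ) : Prop :=
  ∃ (m : ℕ) (p : Fin m → ℝ) (σ : Fin m → Matrix (Fin dS) (Fin dS) ℂ)
    (τ : Fin m → Matrix (Fin dA) (Fin dA) ℂ),
    (∀ k, 0 ≤ p k) ∧ (∑ k, p k = 1) ∧ (∀ k, IsDensity (σ k)) ∧ (∀ k, IsDensity (τ k)) ∧
    ρSA = ∑ k, (p k : ℂ) • (σ k ⊗ₖ τ k)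

/-- A classical-quantum state `ρ_SA = ∑ₖ pₖ Pₖ ⊗ ρᴬₖ` with `Pₖ` mutually orthogonal
rank-one projectors summing to the identity. -/
def IsClassicalQuantum {dS dA : ℕ}
    (ρSA : Matrix (Fin dS × Fin dA) (Fin dS × Fin dA) ℂ) : Prop :=
  ∃ (p : Fin dS → ℝ) (ψ : Fin dS → Fin dS → ℂ) (τ : Fin dS → Matrix (Fin dA) (Fin dA) ℂ),
    (∀ k, 0 ≤ p k) ∧ (∑ k, p k = 1) ∧ ONFam ψ ∧ (∀ k, IsDensity (τ k)) ∧
    ρSA = ∑ k, (p k : ℂ) • (ketbra (ψ k) (ψ k) ⊗ₖ τ k)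

/-- The dephasing map associated with an orthonormal basis `v`. -/
def dephase {n : ℕ} (v : Fin n → Fin n → ℂ) (ρ : Matrix (Fin n) (Fin n) ℂ) :
    Matrix (Fin n) (Fin n) ℂ :=
  ∑ k, ketbra (v k) (v k) * ρ * ketbra (v k) (v k)


/-! ### Auxiliary lemmas -/

lemma matElem_conjT {n : ℕ} (M : Matrix (Fin n) (Fin n) ℂ) (x y : Fin n → ℂ) :
    matElem Mᴴ x y = star (matElem M y x) := by
  simp only [matElem, dotProduct, mulVec, conjTranspose_apply, Pi.star_apply, star_sum, star_mul',
    Finset.mul_sum, star_star]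
  rw [Finset.sum_comm]
  apply Finset.sum_congr rfl; intro i _
  apply Finset.sum_congr rfl; intro j _
  ring

lemma matElem_add {n : ℕ} (A B : Matrix (Fin n) (Fin n) ℂ) (x y : Fin n → ℂ) :
    matElem (A + B) x y = matElem A x y + matElem B x y := by
  simp [matElem, Matrix.add_mulVec, dotProduct_add]

lemma ketbra_mulVec {n : ℕ} (x y z : Fin n → ℂ) :
    ketbra x y *ᵥ z = (star y ⬝ᵥ z) • x := by
  ext s
  simp only [ketbra, mulVec, dotProduct, Matrix.vecMulVec_apply, Pi.smul_apply, Pi.star_apply,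
    smul_eq_mul, Finset.sum_mul]
  apply Finset.sum_congr rfl; intro t _
  ring

/-- Completeness of an orthonormal family of 2 vectors in `ℂ²`. -/
lemma rows_complete {v : Fin 2 → Fin 2 → ℂ} (hv : ONFam v) :
    (Matrix.of v)ᴴ * Matrix.of v = 1 := by
  have h1 : (Matrix.of v) * (Matrix.of v)ᴴ = 1 := by
    ext i j
    have := hv i j
    simp only [dotProduct, Pi.star_apply] at this
    simp only [Matrix.mul_apply, conjTranspose_apply, Matrix.one_apply, Matrix.of_apply]
    calc ∑ t, v i t * star (v j t) = star (∑ t, star (v i t) * v j t) := by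
          simp [star_sum, mul_comm]
      _ = _ := by rw [this]; split <;> simp
  exact mul_eq_one_comm.mp h1

/-- The transpose of the matrix whose rows are the `v k`. -/
def Tm (v : Fin 2 → Fin 2 → ℂ) : Matrix (Fin 2) (Fin 2) ℂ := (Matrix.of v)ᵀ

lemma Tm_mem {v : Fin 2 → Fin 2 → ℂ} (hv : ONFam v) :
    Tm v ∈ Matrix.unitaryGroup (Fin 2) ℂ := by
  rw [Matrix.mem_unitaryGroup_iff]
  have h2 := rows_complete hv
  ext i j
  have e : ((Matrix.of v)ᴴ * Matrix.of v) i j = (1 : Matrix (Fin 2) (Fin 2) ℂ) i j := by rw [h2]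
  simp only [Matrix.mul_apply, conjTranspose_apply, Matrix.of_apply, Matrix.one_apply] at e
  have e2 := congrArg star e
  simp only [star_sum, star_mul', star_star, apply_ite, star_one, star_zero] at e2
  simp only [Tm, Matrix.star_eq_conjTranspose, Matrix.mul_apply, conjTranspose_apply,
    Matrix.transpose_apply, Matrix.of_apply, Matrix.one_apply]
  split at e2 <;> simp_all [mul_comm]

lemma Tm_HT {v : Fin 2 → Fin 2 → ℂ} (hv : ONFam v) : (Tm v)ᴴ * Tm v = 1 := by
  have := Tm_mem hv
  rw [Matrix.mem_unitaryGroup_iff, Matrix.star_eq_conjTranspose] at this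
  exact mul_eq_one_comm.mp this

lemma matElem_eq_B {v : Fin 2 → Fin 2 → ℂ} (U : Matrix (Fin 2) (Fin 2) ℂ) (a b : Fin 2) :
    matElem U (v a) (v b) = ((Tm v)ᴴ * U * (Tm v)) a b := by
  simp only [matElem, dotProduct, mulVec, Matrix.mul_apply, conjTranspose_apply, Tm,
    Matrix.transpose_apply, Matrix.of_apply, Pi.star_apply, Finset.mul_sum, Finset.sum_mul]
  rw [Finset.sum_comm]
  apply Finset.sum_congr rfl; intro i _
  apply Finset.sum_congr rfl; intro j _
  ring

lemma diag_sum {v : Fin 2 → Fin 2 → ℂ} (hv : ONFam v) (M : Matrix (Fin 2) (Fin 2) ℂ) :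
    matElem M (v 0) (v 0) + matElem M (v 1) (v 1) = M.trace := by
  have h2 := rows_complete hv
  have e : ∀ t s : Fin 2, ((Matrix.of v)ᴴ * Matrix.of v) t s
      = (1 : Matrix (Fin 2) (Fin 2) ℂ) t s := by intro t s; rw [h2]
  have e00 := e 0 0; have e01 := e 0 1; have e10 := e 1 0; have e11 := e 1 1
  simp only [Matrix.mul_apply, conjTranspose_apply, Matrix.of_apply, Matrix.one_apply,
    Fin.sum_univ_two, if_true, Fin.zero_eq_one_iff, Fin.one_eq_zero_iff, Nat.succ_ne_self,
    one_ne_zero, ite_true, ite_false, Matrix.one_apply_eq, Matrix.one_apply_ne, ne_eq,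
    reduceCtorEq] at e00 e01 e10 e11
  simp only [matElem, dotProduct, mulVec, Matrix.trace, Matrix.diag, Fin.sum_univ_two,
    Pi.star_apply]
  linear_combination M 0 0 * e00 + M 0 1 * e01 + M 1 0 * e10 + M 1 1 * e11

lemma matElem_dephase {v : Fin 2 → Fin 2 → ℂ} (hv : ONFam v)
    (ρ : Matrix (Fin 2) (Fin 2) ℂ) (i : Fin 2) :
    matElem (dephase v ρ) (v i) (v i) = matElem ρ (v i) (v i) := by
  have expand : ∀ k : Fin 2,
      matElem (ketbra (v k) (v k) * ρ * ketbra (v k) (v k)) (v i) (v i)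
        = (star (v k) ⬝ᵥ v i) * (star (v i) ⬝ᵥ v k) * matElem ρ (v k) (v k) := by
    intro k
    simp only [matElem, ← Matrix.mulVec_mulVec, ketbra_mulVec, Matrix.mulVec_smul,
      dotProduct_smul, smul_eq_mul]
    ring
  have : dephase v ρ = ketbra (v 0) (v 0) * ρ * ketbra (v 0) (v 0)
      + ketbra (v 1) (v 1) * ρ * ketbra (v 1) (v 1) := by
    simp [dephase, Fin.sum_univ_two]
  rw [this, matElem_add, expand 0, expand 1, hv 0 i, hv 1 i]
  fin_cases i <;> simp [hv 0 0, hv 0 1, hv 1 0, hv 1 1]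

/-- Key formula: for `q = 1/2` and incoherent `u`, the expected utility depends only on the
diagonal of `σ` in the energy basis and on `|B₁₀|²` of the rotated unitary. -/
lemma key {v : Fin 2 → Fin 2 → ℂ} (hv : ONFam v) (u : ℝ → ℝ) (hu0 : u 0 = 0) (ε : Fin 2 → ℝ)
    (hZ : u ((ε 1 - ε 0)/2) - u (-((ε 1 - ε 0)/2)) = 0)
    (σ : Matrix (Fin 2) (Fin 2) ℂ) (U : Matrix (Fin 2) (Fin 2) ℂ)
    (hU : U ∈ Matrix.unitaryGroup (Fin 2) ℂ) :
    expUtil u (1/2) ε v σ U =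
      Complex.normSq (((Tm v)ᴴ * U * Tm v) 1 0) *
        ((matElem σ (v 0) (v 0)).re * u (ε 0 - ε 1)
          + (matElem σ (v 1) (v 1)).re * u (ε 1 - ε 0)) := by
  have hTm := Tm_mem hv
  set B : Matrix (Fin 2) (Fin 2) ℂ := (Tm v)ᴴ * U * Tm v with hBdef
  have hB : B ∈ Matrix.unitaryGroup (Fin 2) ℂ := by
    rw [hBdef, ← Matrix.star_eq_conjTranspose]
    exact mul_mem (mul_mem (Unitary.star_mem hTm) hU) hTm
  have hBl : star B * B = 1 := (Unitary.mem_iff.mp hB).1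
  have hBr : B * star B = 1 := (Unitary.mem_iff.mp hB).2
  have entry : ∀ i j : Fin 2, (star B * B) i j = (1 : Matrix (Fin 2) (Fin 2) ℂ) i j := by
    intro i j; rw [hBl]
  have entry' : (B * star B) 0 0 = (1 : Matrix (Fin 2) (Fin 2) ℂ) 0 0 := by rw [hBr]
  have hoff1 := entry 1 0
  have hoff2 := entry 0 1
  have hnn := entry 0 0
  simp only [Matrix.mul_apply, Matrix.star_eq_conjTranspose, Matrix.conjTranspose_apply,
    Fin.sum_univ_two, Matrix.one_apply, if_true, if_false, Fin.zero_eq_one_iff,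
    Fin.one_eq_zero_iff, ite_false, ite_true, Nat.succ_ne_self, one_ne_zero,
    Matrix.one_apply_eq, Matrix.one_apply_ne] at hoff1 hoff2 hnn entry'
  have hswap : star (B 1 0) * B 1 0 = B 0 1 * star (B 0 1) := by
    linear_combination hnn - entry'
  have hns : ((Complex.normSq (B 1 0) : ℝ) : ℂ) = B 1 0 * star (B 1 0) := by
    rw [Complex.star_def, Complex.mul_conj]
  simp only [expUtil, Fin.sum_univ_two]
  simp only [matElem_conjT]
  simp only [matElem_eq_B (v := v) U]
  rw [show (1:ℝ)/2 * ε 0 + (1 - 1/2) * ε 0 - ε 0 = 0 from by ring,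
    show (1:ℝ)/2 * ε 0 + (1 - 1/2) * ε 0 - ε 1 = ε 0 - ε 1 from by ring,
    show (1:ℝ)/2 * ε 1 + (1 - 1/2) * ε 1 - ε 0 = ε 1 - ε 0 from by ring,
    show (1:ℝ)/2 * ε 1 + (1 - 1/2) * ε 1 - ε 1 = 0 from by ring,
    show (1:ℝ)/2 * ε 0 + (1 - 1/2) * ε 1 - ε 0 = (ε 1 - ε 0)/2 from by ring,
    show (1:ℝ)/2 * ε 0 + (1 - 1/2) * ε 1 - ε 1 = -((ε 1 - ε 0)/2) from by ring,
    show (1:ℝ)/2 * ε 1 + (1 - 1/2) * ε 0 - ε 0 = (ε 1 - ε 0)/2 from by ring,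
    show (1:ℝ)/2 * ε 1 + (1 - 1/2) * ε 0 - ε 1 = -((ε 1 - ε 0)/2) from by ring]
  have hZ' : u (-((ε 1 - ε 0)/2)) = u ((ε 1 - ε 0)/2) := by linarith
  rw [hZ', hu0]
  have hre' : ∀ (z : ℂ) (c : ℝ), z.re * c = (z * (c:ℂ)).re := by
    intro z c; simp [Complex.mul_re]
  simp only [mul_zero, zero_add, add_zero]
  simp only [hre', ← Complex.add_re, ← Complex.re_ofReal_mul]
  simp only [← hBdef]
  congr 1
  simp only [Complex.star_def] at hoff1 hoff2 hswap hns ⊢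
  linear_combination (-hns) * ((matElem σ (v 0) (v 0)) * (u (ε 0 - ε 1):ℂ)
      + (matElem σ (v 1) (v 1)) * (u (ε 1 - ε 0):ℂ)) +
    (matElem σ (v 0) (v 1)) * ((u ((ε 1 - ε 0)/2)):ℂ) * hoff1 +
    (matElem σ (v 1) (v 0)) * ((u ((ε 1 - ε 0)/2)):ℂ) * hoff2 -
    (matElem σ (v 1) (v 1)) * ((u (ε 1 - ε 0)):ℂ) * hswap

/-- for a qubit, `q = 1/2` and an incoherent utility (`Z = 0`), the optimal
expected utility is `max(0, X - pY)` with `p = ⟨ε₁|ρ|ε₁⟩`; in particular `𝓤(ρ) = 𝓤(Δ(ρ))`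
where `Δ` is the dephasing in the energy eigenbasis. -/
theorem stmt12 (u : ℝ → ℝ) (hu0 : u 0 = 0)
    (ε : Fin 2 → ℝ) (hε : ε 0 < ε 1)
    (v : Fin 2 → Fin 2 → ℂ) (hv : ONFam v)
    (hZ : u ((ε 1 - ε 0)/2) - u (-((ε 1 - ε 0)/2)) = 0)
    (ρ : Matrix (Fin 2) (Fin 2) ℂ) (hρ : IsDensity ρ)
    (p : ℝ) (hp : matElem ρ (v 0) (v 0) = (p : ℂ)) :
    IsGreatest {x : ℝ | ∃ U ∈ Matrix.unitaryGroup (Fin 2) ℂ, x = expUtil u (1/2) ε v ρ U}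
      (max 0 (u (ε 1 - ε 0) - p * (u (ε 1 - ε 0) - u (-(ε 1 - ε 0))))) ∧
    optUtil u (1/2) ε v ρ = optUtil u (1/2) ε v (dephase v ρ) := by
  have hTm := Tm_mem hv
  have hTl := Tm_HT hv
  -- diagonal data of ρ
  have hdiag1 : matElem ρ (v 1) (v 1) = ((1 - p : ℝ) : ℂ) := by
    have := diag_sum hv ρ
    rw [hρ.2, hp] at this
    push_cast
    linear_combination this
  have hre0 : (matElem ρ (v 0) (v 0)).re = p := by rw [hp]; simp
  have hre1 : (matElem ρ (v 1) (v 1)).re = 1 - p := by rw [hdiag1]; simp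
  -- the constant c
  set c : ℝ := p * u (ε 0 - ε 1) + (1 - p) * u (ε 1 - ε 0) with hc
  have hval : ∀ U ∈ Matrix.unitaryGroup (Fin 2) ℂ,
      expUtil u (1/2) ε v ρ U = Complex.normSq (((Tm v)ᴴ * U * Tm v) 1 0) * c := by
    intro U hU
    rw [key hv u hu0 ε hZ ρ U hU, hre0, hre1]
  have htarget : max 0 (u (ε 1 - ε 0) - p * (u (ε 1 - ε 0) - u (-(ε 1 - ε 0)))) = max 0 c := by
    have hEE : -(ε 1 - ε 0) = ε 0 - ε 1 := by ring
    rw [hEE, hc]; ring_nf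
  -- bounds on normSq of B 1 0
  have hbound : ∀ U ∈ Matrix.unitaryGroup (Fin 2) ℂ,
      Complex.normSq (((Tm v)ᴴ * U * Tm v) 1 0) ≤ 1 := by
    intro U hU
    set B : Matrix (Fin 2) (Fin 2) ℂ := (Tm v)ᴴ * U * Tm v with hBdef
    have hB : B ∈ Matrix.unitaryGroup (Fin 2) ℂ := by
      rw [hBdef, ← Matrix.star_eq_conjTranspose]
      exact mul_mem (mul_mem (Unitary.star_mem hTm) hU) hTm
    have hBl : star B * B = 1 := (Unitary.mem_iff.mp hB).1
    have hnn : (star B * B) 0 0 = (1 : Matrix (Fin 2) (Fin 2) ℂ) 0 0 := by rw [hBl]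
    simp only [Matrix.mul_apply, Matrix.star_eq_conjTranspose, Matrix.conjTranspose_apply,
      Fin.sum_univ_two, Matrix.one_apply_eq] at hnn
    have hnn' := congrArg Complex.re hnn
    simp only [Complex.add_re, Complex.star_def, Complex.mul_re, Complex.conj_re,
      Complex.conj_im, Complex.one_re] at hnn'
    have h00 : 0 ≤ Complex.normSq (B 0 0) := Complex.normSq_nonneg _
    simp only [Complex.normSq_apply] at h00 ⊢
    nlinarith [hnn']
  constructor
  · rw [htarget]
    constructor
    · -- membership
      rcases le_total c 0 with hle | hle
      · refine ⟨1, one_mem _, ?_⟩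
        rw [hval 1 (one_mem _)]
        have hB1 : (Tm v)ᴴ * 1 * Tm v = 1 := by rw [Matrix.mul_one, hTl]
        rw [hB1, max_eq_left hle]
        simp
      · set X : Matrix (Fin 2) (Fin 2) ℂ := !![0, 1; 1, 0] with hX
        have hXu : X ∈ Matrix.unitaryGroup (Fin 2) ℂ := by
          rw [Matrix.mem_unitaryGroup_iff, Matrix.star_eq_conjTranspose]
          ext i j
          fin_cases i <;> fin_cases j <;>
            simp [hX, Matrix.mul_apply, Fin.sum_univ_two, Matrix.one_apply]
        have hU2 : Tm v * X * (Tm v)ᴴ ∈ Matrix.unitaryGroup (Fin 2) ℂ := by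
          rw [← Matrix.star_eq_conjTranspose]
          exact mul_mem (mul_mem hTm hXu) (Unitary.star_mem hTm)
        refine ⟨Tm v * X * (Tm v)ᴴ, hU2, ?_⟩
        rw [hval _ hU2]
        have hBX : (Tm v)ᴴ * (Tm v * X * (Tm v)ᴴ) * Tm v = X := by
          calc (Tm v)ᴴ * (Tm v * X * (Tm v)ᴴ) * Tm v
              = ((Tm v)ᴴ * Tm v) * X * ((Tm v)ᴴ * Tm v) := by
                simp only [Matrix.mul_assoc]
            _ = X := by rw [hTl]; simp
        rw [hBX, max_eq_right hle]
        simp [hX]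
    · -- upper bound
      rintro x ⟨U, hU, rfl⟩
      rw [hval U hU]
      have h1 := hbound U hU
      have h0 : 0 ≤ Complex.normSq (((Tm v)ᴴ * U * Tm v) 1 0) := Complex.normSq_nonneg _
      rcases le_total c 0 with hle | hle
      · exact le_max_of_le_left (mul_nonpos_of_nonneg_of_nonpos h0 hle)
      · exact le_max_of_le_right (by nlinarith)
  · -- dephasing invariance
    unfold optUtil
    refine iSup_congr fun U => ?_
    rw [key hv u hu0 ε hZ ρ U U.2, key hv u hu0 ε hZ (dephase v ρ) U U.2,
      matElem_dephase hv ρ 0, matElem_dephase hv ρ 1]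

end Daemonic
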